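/- arXiv:0903.1456 — 2 statements merged into one kernel-verified Lean document; each statement's English description precedes it below -/
import Mathlib

section
/- In the setting of two commuting measure-preserving actions of countable groups Γ, Λ on (M, B, m) with fundamental domains X, Y of finite positive measure and m(X) = (k+ε)·m(Y) (k ≥ 1 integer, 0 ≤ ε < 1): suppose there exist sequences of measurable sets A_n ⊆ B_n ⊆ C_n of finite positive measure such that lim m(A_n)/m(C_n) = 1, and such that for every γ ∈ Γ, m(A_n ∩ γ·X) ≠ 0 implies γ·X ⊆ B_n, and m(B_n ∩ γ·X) ≠ 0 implies γ·X ⊆ C_n (and similarly for Λ and Y). Then for every set A invariant under both actions, m(A ∩ X) = (k+ε)·m(A ∩ Y). -/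
open MeasureTheory Set Pointwise ENNReal Filter

/-- Key counting lemma: if every translate of the fundamental domain `F` meeting `P`
(positively) lies in `Q`, then for invariant sets `D`, `E` we have
`μ (D ∩ P) * μ (E ∩ F) ≤ μ (E ∩ Q) * μ (D ∩ F)`. -/
theorem aux_sandwich_count {M : Type*} [MeasurableSpace M]
    {G : Type*} [Group G] [Countable G] [MulAction G M]
    (hmeas : ∀ g : G, Measurable fun x : M => g • x)
    (μ : Measure M) [SMulInvariantMeasure G M μ]
    {F : Set M} (hF : IsFundamentalDomain G F μ)
    {P Q : Set M} (hPQ : ∀ g : G, μ (P ∩ g • F) ≠ 0 → g • F ⊆ Q)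
    {D E : Set M} (hEmeas : MeasurableSet E)
    (hD : ∀ g : G, μ (symmDiff (g • D) D) = 0)
    (hE : ∀ g : G, μ (symmDiff (g • E) E) = 0) :
    μ (D ∩ P) * μ (E ∩ F) ≤ μ (E ∩ Q) * μ (D ∩ F) := by
  letI : MeasurableSpace G := ⊤
  haveI : MeasurableSMul G M :=
    { measurable_const_smul := fun c => hmeas c, measurable_smul_const := fun _ => measurable_from_top }
  -- invariance of intersections with translates
  have hinv : ∀ (W : Set M), (∀ g : G, μ (symmDiff (g • W) W) = 0) →
      ∀ g : G, μ (W ∩ g • F) = μ (W ∩ F) := by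
    intro W hW g
    have h1 : (g⁻¹ • W : Set M) =ᵐ[μ] W := measure_symmDiff_eq_zero_iff.mp (hW g⁻¹)
    calc μ (W ∩ g • F) = μ (g • (g⁻¹ • W ∩ F)) := by
          rw [smul_set_inter, smul_inv_smul]
      _ = μ (g⁻¹ • W ∩ F) := measure_smul μ g _
      _ = μ (W ∩ F) := measure_congr (h1.inter (ae_eq_refl F))
  set S : Set G := {g : G | μ (P ∩ g • F) ≠ 0} with hS
  -- Step 1 : μ (D ∩ P) ≤ (∑' _ : S, 1) * μ (D ∩ F)
  have step1 : μ (D ∩ P) ≤ (∑' _ : S, (1 : ℝ≥0∞)) * μ (D ∩ F) := by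
    have h0 : μ (D ∩ P) = ∑' g : G, μ (D ∩ P ∩ g • F) := hF.measure_eq_tsum' (D ∩ P)
    have hsupp : Function.support (fun g : G => μ (D ∩ P ∩ g • F)) ⊆ S := by
      intro g hg
      simp only [Function.mem_support] at hg
      intro h0'
      apply hg
      refine measure_mono_null ?_ h0'
      exact inter_subset_inter inter_subset_right (subset_refl _)
    have h1 : ∑' g : S, μ (D ∩ P ∩ (g : G) • F) = ∑' g : G, μ (D ∩ P ∩ g • F) :=
      tsum_subtype_eq_of_support_subset hsupp
    calc μ (D ∩ P) = ∑' g : S, μ (D ∩ P ∩ (g : G) • F) := by rw [h0, ← h1]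
      _ ≤ ∑' g : S, μ (D ∩ (g : G) • F) := by
          refine ENNReal.tsum_le_tsum fun g => measure_mono ?_
          exact inter_subset_inter inter_subset_left (subset_refl _)
      _ = ∑' _ : S, μ (D ∩ F) := tsum_congr fun g => hinv D hD g
      _ = (∑' _ : S, (1 : ℝ≥0∞)) * μ (D ∩ F) := by
          rw [← ENNReal.tsum_mul_right]; simp
  -- Step 2 : (∑' _ : S, 1) * μ (E ∩ F) ≤ μ (E ∩ Q)
  have step2 : (∑' _ : S, (1 : ℝ≥0∞)) * μ (E ∩ F) ≤ μ (E ∩ Q) := by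
    have h1 : (∑' _ : S, (1 : ℝ≥0∞)) * μ (E ∩ F) = ∑' g : S, μ (E ∩ (g : G) • F) := by
      rw [← ENNReal.tsum_mul_right]
      exact tsum_congr fun g => by rw [one_mul, hinv E hE g]
    rw [h1]
    have hdisj : Pairwise (Function.onFun (AEDisjoint μ) fun g : S => E ∩ (g : G) • F) := by
      intro a b hab
      have : (a : G) ≠ (b : G) := Subtype.coe_injective.ne hab
      exact (hF.aedisjoint this).mono inter_subset_right inter_subset_right
    have hnm : ∀ g : S, NullMeasurableSet (E ∩ (g : G) • F) μ :=
      fun g => hEmeas.nullMeasurableSet.inter (hF.nullMeasurableSet_smul (g : G))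
    rw [← measure_iUnion₀ hdisj hnm]
    refine measure_mono (iUnion_subset fun g => ?_)
    exact inter_subset_inter (subset_refl _) (hPQ (g : G) g.2)
  calc μ (D ∩ P) * μ (E ∩ F)
      ≤ ((∑' _ : S, (1 : ℝ≥0∞)) * μ (D ∩ F)) * μ (E ∩ F) :=
        mul_le_mul_left step1 _
    _ = μ (D ∩ F) * ((∑' _ : S, (1 : ℝ≥0∞)) * μ (E ∩ F)) := by ring
    _ ≤ μ (D ∩ F) * μ (E ∩ Q) := mul_le_mul_right step2 _
    _ = μ (E ∩ Q) * μ (D ∩ F) := mul_comm _ _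

/-- If there are sequences `A n ⊆ B n ⊆ C n` with `μ (A n)/μ (C n) → 1` such that any
translate of `X` (resp. `Y`) meeting `A n` lies in `B n` and any translate meeting `B n`
lies in `C n`, then `μ (A ∩ X) = (k+ε)·μ (A ∩ Y)` for every jointly invariant set. -/
theorem measure_inter_eq_of_sandwich_sequences
    {M : Type*} [MeasurableSpace M]
    {Γ : Type*} [Group Γ] [Countable Γ] [MulAction Γ M]
    {Λ : Type*} [Group Λ] [Countable Λ] [MulAction Λ M]
    (hmeasΓ : ∀ γ : Γ, Measurable fun x : M => γ • x)
    (hmeasΛ : ∀ l : Λ, Measurable fun x : M => l • x)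
    (μ : Measure M) [SigmaFinite μ]
    [SMulInvariantMeasure Γ M μ] [SMulInvariantMeasure Λ M μ]
    (hcomm : ∀ (γ : Γ) (l : Λ) (x : M), γ • (l • x) = l • (γ • x))
    (X Y : Set M) (hXmeas : MeasurableSet X) (hYmeas : MeasurableSet Y)
    (hX : IsFundamentalDomain Γ X μ) (hY : IsFundamentalDomain Λ Y μ)
    (hX0 : 0 < μ X) (hXfin : μ X ≠ ⊤) (hY0 : 0 < μ Y) (hYfin : μ Y ≠ ⊤)
    (k : ℕ) (hk : 1 ≤ k) (ε : ℝ) (hε0 : 0 ≤ ε) (hε1 : ε < 1)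
    (hcov : μ X = ((k : ℝ≥0∞) + ENNReal.ofReal ε) * μ Y)
    (A B C : ℕ → Set M)
    (hmeasA : ∀ n, MeasurableSet (A n)) (hmeasB : ∀ n, MeasurableSet (B n))
    (hmeasC : ∀ n, MeasurableSet (C n))
    (hAB : ∀ n, A n ⊆ B n) (hBC : ∀ n, B n ⊆ C n)
    (hA0 : ∀ n, 0 < μ (A n)) (hCfin : ∀ n, μ (C n) ≠ ⊤)
    (hlim : Tendsto (fun n => μ (A n) / μ (C n)) atTop (nhds 1))
    (hΓA : ∀ n, ∀ γ : Γ, μ (A n ∩ γ • X) ≠ 0 → γ • X ⊆ B n)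
    (hΓB : ∀ n, ∀ γ : Γ, μ (B n ∩ γ • X) ≠ 0 → γ • X ⊆ C n)
    (hΛA : ∀ n, ∀ l : Λ, μ (A n ∩ l • Y) ≠ 0 → l • Y ⊆ B n)
    (hΛB : ∀ n, ∀ l : Λ, μ (B n ∩ l • Y) ≠ 0 → l • Y ⊆ C n) :
    ∀ D : Set M, MeasurableSet D →
      (∀ γ : Γ, μ (symmDiff (γ • D) D) = 0) →
      (∀ l : Λ, μ (symmDiff (l • D) D) = 0) →
      μ (D ∩ X) = ((k : ℝ≥0∞) + ENNReal.ofReal ε) * μ (D ∩ Y) := by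
  intro D hDmeas hDΓ hDΛ
  -- invariance of univ
  have hunivΓ : ∀ γ : Γ, μ (symmDiff (γ • (univ : Set M)) univ) = 0 := by
    intro γ; rw [Set.smul_set_univ, symmDiff_self]; simp
  have hunivΛ : ∀ l : Λ, μ (symmDiff (l • (univ : Set M)) univ) = 0 := by
    intro l; rw [Set.smul_set_univ, symmDiff_self]; simp
  -- finiteness facts
  have hDXfin : μ (D ∩ X) ≠ ⊤ := fun h => hXfin (top_le_iff.mp (h ▸ measure_mono inter_subset_right))
  have hDYfin : μ (D ∩ Y) ≠ ⊤ := fun h => hYfin (top_le_iff.mp (h ▸ measure_mono inter_subset_right))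
  -- the per-n inequality, abstract form
  have key : ∀ (u v : ℝ≥0∞), u ≠ ⊤ → (∀ n, μ (A n) * u ≤ μ (C n) * v) → u ≤ v := by
    intro u v hu h
    have hC0 : ∀ n, μ (C n) ≠ 0 := fun n =>
      fun h0 => (hA0 n).ne' (le_antisymm (h0 ▸ measure_mono ((hAB n).trans (hBC n))) zero_le)
    have hle : ∀ n, μ (A n) / μ (C n) * u ≤ v := by
      intro n
      have h1 : μ (A n) * u / μ (C n) ≤ μ (C n) * v / μ (C n) :=
        ENNReal.div_le_div_right (h n) _
      have h2 : μ (C n) * v / μ (C n) = v := by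
        rw [mul_comm, mul_div_assoc, ENNReal.div_self (hC0 n) (hCfin n), mul_one]
      have h3 : μ (A n) / μ (C n) * u = μ (A n) * u / μ (C n) := by
        rw [div_eq_mul_inv, div_eq_mul_inv, mul_right_comm]
      rw [h3]
      exact h1.trans h2.le
    have htend : Tendsto (fun n => μ (A n) / μ (C n) * u) atTop (nhds u) := by
      have := ENNReal.Tendsto.mul_const hlim (b := u) (Or.inl one_ne_zero)
      rwa [one_mul] at this
    exact le_of_tendsto htend (Eventually.of_forall hle)
  -- apply the counting lemma four times
  have ineq1 : ∀ n, μ (A n) * (μ (D ∩ X) * μ Y) ≤ μ (C n) * (μ (D ∩ Y) * μ X) := by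
    intro n
    have e1 := aux_sandwich_count hmeasΓ μ hX (hΓA n) hDmeas hunivΓ hDΓ
    have e2 := aux_sandwich_count hmeasΛ μ hY (hΛB n) MeasurableSet.univ hDΛ hunivΛ
    simp only [univ_inter] at e1 e2
    calc μ (A n) * (μ (D ∩ X) * μ Y) = (μ (A n) * μ (D ∩ X)) * μ Y := by ring
      _ ≤ (μ (D ∩ B n) * μ X) * μ Y := mul_le_mul_left e1 _
      _ = (μ (D ∩ B n) * μ Y) * μ X := by ring
      _ ≤ (μ (C n) * μ (D ∩ Y)) * μ X := mul_le_mul_left e2 _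
      _ = μ (C n) * (μ (D ∩ Y) * μ X) := by ring
  have ineq2 : ∀ n, μ (A n) * (μ (D ∩ Y) * μ X) ≤ μ (C n) * (μ (D ∩ X) * μ Y) := by
    intro n
    have e1 := aux_sandwich_count hmeasΛ μ hY (hΛA n) hDmeas hunivΛ hDΛ
    have e2 := aux_sandwich_count hmeasΓ μ hX (hΓB n) MeasurableSet.univ hDΓ hunivΓ
    simp only [univ_inter] at e1 e2
    calc μ (A n) * (μ (D ∩ Y) * μ X) = (μ (A n) * μ (D ∩ Y)) * μ X := by ring
      _ ≤ (μ (D ∩ B n) * μ Y) * μ X := mul_le_mul_left e1 _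
      _ = (μ (D ∩ B n) * μ X) * μ Y := by ring
      _ ≤ (μ (C n) * μ (D ∩ X)) * μ Y := mul_le_mul_left e2 _
      _ = μ (C n) * (μ (D ∩ X) * μ Y) := by ring
  have le1 : μ (D ∩ X) * μ Y ≤ μ (D ∩ Y) * μ X :=
    key _ _ (ENNReal.mul_ne_top hDXfin hYfin) ineq1
  have le2 : μ (D ∩ Y) * μ X ≤ μ (D ∩ X) * μ Y :=
    key _ _ (ENNReal.mul_ne_top hDYfin hXfin) ineq2
  have heq : μ (D ∩ X) * μ Y = μ (D ∩ Y) * μ X := le_antisymm le1 le2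
  rw [hcov] at heq
  have heq' : μ (D ∩ X) * μ Y = (((k : ℝ≥0∞) + ENNReal.ofReal ε) * μ (D ∩ Y)) * μ Y := by
    rw [heq]; ring
  calc μ (D ∩ X) = μ (D ∩ X) * μ Y / μ Y := by
        rw [mul_div_assoc, ENNReal.div_self hY0.ne' hYfin, mul_one]
    _ = (((k : ℝ≥0∞) + ENNReal.ofReal ε) * μ (D ∩ Y)) * μ Y / μ Y := by rw [heq']
    _ = ((k : ℝ≥0∞) + ENNReal.ofReal ε) * μ (D ∩ Y) := by
        rw [mul_div_assoc, ENNReal.div_self hY0.ne' hYfin, mul_one]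
end

section
/- Let Λ ⋉_α Γ be a semidirect product of countable groups acting measure-preservingly on (M, B, m) via σ, such that the restriction to 1×Γ has a fundamental domain X and the restriction to Λ×1 has a fundamental domain Y, with 0 < m(X), m(Y) < ∞. If m(A ∩ X) = m(A ∩ Y) for every measurable set A invariant under the full semidirect product action, then the actions of 1×Γ and Λ×1 have a common fundamental domain. -/
open MeasureTheory Set Pointwise ENNReal

/-- `S` is a fundamental domain for the restriction of the action to the image of a family
of group elements `a : ι → G`. -/
def IsSubFD {M : Type*} [MeasurableSpace M] {G : Type*} [Group G] [MulAction G M]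
    (μ : Measure M) {ι : Type*} (a : ι → G) (S : Set M) : Prop :=
  μ ((⋃ i : ι, a i • S)ᶜ) = 0 ∧ Pairwise fun i j : ι => μ ((a i • S) ∩ (a j • S)) = 0

/-- Greedy exhaustion: at step `n` we have accumulated a matched part of `X` (first
component) and a matched part of `Y` (second component); at step `n` we match the piece
`(X \ matched) ∩ (g n)⁻¹ • (Y \ matched)` of `X` to its image under `g n` in `Y`. -/
def fdDR {M G : Type*} [Group G] [MulAction G M] (X Y : Set M) (g : ℕ → G) : ℕ → Set M × Set M
  | 0 => (∅, ∅)
  | (n+1) =>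
      let p := fdDR X Y g n
      let P := (X \ p.1) ∩ (g n)⁻¹ • (Y \ p.2)
      (p.1 ∪ P, p.2 ∪ g n • P)

/-- The piece of `X` matched at step `n`. -/
def fdP {M G : Type*} [Group G] [MulAction G M] (X Y : Set M) (g : ℕ → G) (n : ℕ) : Set M :=
  (X \ (fdDR X Y g n).1) ∩ (g n)⁻¹ • (Y \ (fdDR X Y g n).2)

lemma fdDR_succ_fst {M G : Type*} [Group G] [MulAction G M] (X Y : Set M) (g : ℕ → G) (n : ℕ) :
    (fdDR X Y g (n+1)).1 = (fdDR X Y g n).1 ∪ fdP X Y g n := rfl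

lemma fdDR_succ_snd {M G : Type*} [Group G] [MulAction G M] (X Y : Set M) (g : ℕ → G) (n : ℕ) :
    (fdDR X Y g (n+1)).2 = (fdDR X Y g n).2 ∪ g n • fdP X Y g n := rfl

/-- For a measure-preserving action of a semidirect product `Γ ⋊[α] Λ` such that `1 × Γ`
has a fundamental domain `X` and `Λ × 1` has a fundamental domain `Y`, both of finite
positive measure, if `μ (A ∩ X) = μ (A ∩ Y)` for every set invariant under the whole
semidirect product, then the two subgroup actions have a common fundamental domain. -/
theorem semidirect_common_fundamentalDomain
    {M : Type*} [MeasurableSpace M]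
    {Γ Λ : Type*} [Group Γ] [Group Λ] [Countable Γ] [Countable Λ]
    (α : Λ →* MulAut Γ)
    [MulAction (Γ ⋊[α] Λ) M]
    (hmeas : ∀ g : Γ ⋊[α] Λ, Measurable fun x : M => g • x)
    (μ : Measure M) [SigmaFinite μ] [SMulInvariantMeasure (Γ ⋊[α] Λ) M μ]
    (X Y : Set M) (hXmeas : MeasurableSet X) (hYmeas : MeasurableSet Y)
    (hX : IsSubFD μ (fun γ : Γ => SemidirectProduct.inl (φ := α) γ) X)
    (hY : IsSubFD μ (fun l : Λ => SemidirectProduct.inr (φ := α) l) Y)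
    (hX0 : 0 < μ X) (hXfin : μ X ≠ ⊤) (hY0 : 0 < μ Y) (hYfin : μ Y ≠ ⊤)
    (hinv : ∀ A : Set M, MeasurableSet A →
      (∀ g : Γ ⋊[α] Λ, μ (symmDiff (g • A) A) = 0) →
      μ (A ∩ X) = μ (A ∩ Y)) :
    ∃ F : Set M, MeasurableSet F ∧
      IsSubFD μ (fun γ : Γ => SemidirectProduct.inl (φ := α) γ) F ∧
      IsSubFD μ (fun l : Λ => SemidirectProduct.inr (φ := α) l) F := by
  classical
  haveI : Countable (Γ ⋊[α] Λ) := by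
    have : Function.Injective (fun g : Γ ⋊[α] Λ => (g.left, g.right)) := by
      intro a b h; simp only [Prod.mk.injEq] at h; ext <;> simp [h.1, h.2]
    exact this.countable
  -- measure of a translate
  have msmul : ∀ (g : Γ ⋊[α] Λ) (s : Set M), μ (g • s) = μ s := fun g s => measure_smul μ g s
  have smulMeas : ∀ (g : Γ ⋊[α] Λ) {s : Set M}, MeasurableSet s → MeasurableSet (g • s) := by
    intro g s hs
    rw [← preimage_smul_inv]
    exact hs.preimage (hmeas g⁻¹)
  obtain ⟨e, he⟩ := exists_surjective_nat (Γ ⋊[α] Λ)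
  set g : ℕ → Γ ⋊[α] Λ := fun n => e (Nat.unpair n).1 with hg
  set P : ℕ → Set M := fdP X Y g with hP
  set Q : ℕ → Set M := fun n => g n • P n with hQ
  -- basic measurability of the construction
  have hDRmeas : ∀ n, MeasurableSet (fdDR X Y g n).1 ∧ MeasurableSet (fdDR X Y g n).2 := by
    intro n
    induction n with
    | zero => exact ⟨MeasurableSet.empty, MeasurableSet.empty⟩
    | succ k ih =>
        have hPk : MeasurableSet (P k) :=
          (hXmeas.diff ih.1).inter (smulMeas (g k)⁻¹ (hYmeas.diff ih.2))
        exact ⟨ih.1.union hPk, ih.2.union (smulMeas (g k) hPk)⟩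
  have hPmeas : ∀ n, MeasurableSet (P n) := fun n =>
    (hXmeas.diff (hDRmeas n).1).inter (smulMeas (g n)⁻¹ (hYmeas.diff (hDRmeas n).2))
  have hQmeas : ∀ n, MeasurableSet (Q n) := fun n => smulMeas (g n) (hPmeas n)
  -- basic inclusions
  have hPsub : ∀ n, P n ⊆ X \ (fdDR X Y g n).1 := fun n => inter_subset_left
  have hQsub : ∀ n, Q n ⊆ Y \ (fdDR X Y g n).2 := by
    intro n
    have : Q n ⊆ g n • ((g n)⁻¹ • (Y \ (fdDR X Y g n).2)) :=
      smul_set_mono inter_subset_right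
    rwa [smul_inv_smul] at this
  have hmono : ∀ m n, m ≤ n → (fdDR X Y g m).1 ⊆ (fdDR X Y g n).1 ∧
      (fdDR X Y g m).2 ⊆ (fdDR X Y g n).2 := by
    intro m n hmn
    induction n, hmn using Nat.le_induction with
    | base => exact ⟨subset_rfl, subset_rfl⟩
    | succ k hk ih =>
        rw [fdDR_succ_fst, fdDR_succ_snd]
        exact ⟨ih.1.trans subset_union_left, ih.2.trans subset_union_left⟩
  have hPinD : ∀ n, P n ⊆ (fdDR X Y g (n+1)).1 := by
    intro n; rw [fdDR_succ_fst]; exact subset_union_right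
  have hQinR : ∀ n, Q n ⊆ (fdDR X Y g (n+1)).2 := by
    intro n; rw [fdDR_succ_snd]; exact subset_union_right
  have hPdisj : ∀ m n, m ≠ n → P m ∩ P n = ∅ := by
    have key : ∀ m n, m < n → P m ∩ P n = ∅ := by
      intro m n hmn
      apply eq_empty_of_subset_empty
      intro x ⟨hxm, hxn⟩
      exact ((hPsub n hxn).2 ((hmono (m+1) n hmn).1 (hPinD m hxm))).elim
    intro m n hmn
    rcases hmn.lt_or_gt with h | h
    · exact key m n h
    · rw [inter_comm]; exact key n m h
  have hQdisj : ∀ m n, m ≠ n → Q m ∩ Q n = ∅ := by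
    have key : ∀ m n, m < n → Q m ∩ Q n = ∅ := by
      intro m n hmn
      apply eq_empty_of_subset_empty
      intro x ⟨hxm, hxn⟩
      exact ((hQsub n hxn).2 ((hmono (m+1) n hmn).2 (hQinR m hxm))).elim
    intro m n hmn
    rcases hmn.lt_or_gt with h | h
    · exact key m n h
    · rw [inter_comm]; exact key n m h
  set D : Set M := ⋃ n, P n with hD
  set R : Set M := ⋃ n, Q n with hR
  have hDmeas : MeasurableSet D := MeasurableSet.iUnion hPmeas
  have hRmeas : MeasurableSet R := MeasurableSet.iUnion hQmeas
  have hDX : D ⊆ X := iUnion_subset fun n => (hPsub n).trans diff_subset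
  have hRY : R ⊆ Y := iUnion_subset fun n => (hQsub n).trans diff_subset
  have hDRD : ∀ n, (fdDR X Y g n).1 ⊆ D ∧ (fdDR X Y g n).2 ⊆ R := by
    intro n
    induction n with
    | zero => exact ⟨empty_subset _, empty_subset _⟩
    | succ k ih =>
        rw [fdDR_succ_fst, fdDR_succ_snd]
        exact ⟨union_subset ih.1 (subset_iUnion P k),
               union_subset ih.2 (subset_iUnion Q k)⟩
  set X' : Set M := X \ D with hX'
  set Y' : Set M := Y \ R with hY'
  have hX'meas : MeasurableSet X' := hXmeas.diff hDmeas
  have hY'meas : MeasurableSet Y' := hYmeas.diff hRmeas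
  -- Claim A: remainders cannot be matched by any group element
  have claimA : ∀ h : Γ ⋊[α] Λ, μ (h • X' ∩ Y') = 0 := by
    intro h
    obtain ⟨m, hm⟩ := he h
    have hsub : ∀ k : ℕ, h • X' ∩ Y' ⊆ Q (Nat.pair m k) := by
      intro k
      set n := Nat.pair m k with hn
      have hgn : g n = h := by rw [hg]; simp [hn, Nat.unpair_pair, hm]
      have : Q n = g n • (X \ (fdDR X Y g n).1) ∩ (Y \ (fdDR X Y g n).2) := by
        rw [hQ]
        show g n • P n = _
        rw [hP]
        show g n • ((X \ (fdDR X Y g n).1) ∩ (g n)⁻¹ • (Y \ (fdDR X Y g n).2)) = _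
        rw [smul_set_inter, smul_inv_smul]
      rw [this, hgn]
      apply inter_subset_inter
      · exact smul_set_mono (diff_subset_diff_right (hDRD n).1)
      · exact diff_subset_diff_right (hDRD n).2
    by_contra hne
    have hpos : 0 < μ (h • X' ∩ Y') := pos_iff_ne_zero.mpr hne
    have hdisjk : Pairwise (Function.onFun Disjoint fun k : ℕ => Q (Nat.pair m k)) := by
      intro k k' hkk'
      refine Set.disjoint_iff_inter_eq_empty.mpr (hQdisj _ _ ?_)
      intro hpair
      exact hkk' (by simpa using congrArg (fun t => (Nat.unpair t).2) hpair)
    have hsum : μ (⋃ k : ℕ, Q (Nat.pair m k)) = ∑' k : ℕ, μ (Q (Nat.pair m k)) :=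
      measure_iUnion hdisjk fun k => hQmeas _
    have hle : (⊤ : ℝ≥0∞) ≤ μ Y := by
      calc (⊤ : ℝ≥0∞) = ∑' _ : ℕ, μ (h • X' ∩ Y') :=
            (ENNReal.tsum_const_eq_top_of_ne_zero hne).symm
        _ ≤ ∑' k : ℕ, μ (Q (Nat.pair m k)) :=
            ENNReal.tsum_le_tsum fun k => measure_mono (hsub k)
        _ = μ (⋃ k : ℕ, Q (Nat.pair m k)) := hsum.symm
        _ ≤ μ Y := measure_mono (iUnion_subset fun k => (subset_iUnion Q _).trans hRY)
    exact hYfin (top_le_iff.mp hle)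

  -- saturations are invariant
  have satSub : ∀ (W : Set M) (h : Γ ⋊[α] Λ),
      h • (⋃ h' : Γ ⋊[α] Λ, h' • W) ⊆ ⋃ h' : Γ ⋊[α] Λ, h' • W := by
    intro W h
    rw [smul_set_iUnion]
    exact iUnion_subset fun h' => by
      rw [smul_smul]; exact subset_iUnion_of_subset (h * h') subset_rfl
  have satEq : ∀ (W : Set M) (h : Γ ⋊[α] Λ),
      h • (⋃ h' : Γ ⋊[α] Λ, h' • W) = ⋃ h' : Γ ⋊[α] Λ, h' • W := by
    intro W h
    refine subset_antisymm (satSub W h) ?_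
    have := smul_set_mono (a := h) (satSub W h⁻¹)
    rwa [smul_inv_smul] at this
  have selfSub : ∀ W : Set M, W ⊆ ⋃ h' : Γ ⋊[α] Λ, h' • W := by
    intro W x hx
    exact mem_iUnion.mpr ⟨1, by rwa [one_smul]⟩
  -- transfer of measure through the matching, for invariant sets
  have transfer : ∀ W : Set M, MeasurableSet W → (∀ h : Γ ⋊[α] Λ, h • W = W) →
      μ (W ∩ D) = μ (W ∩ R) := by
    intro W hWm hWinv
    have h1 : W ∩ D = ⋃ n, W ∩ P n := by rw [hD, inter_iUnion]
    have h2 : W ∩ R = ⋃ n, W ∩ Q n := by rw [hR, inter_iUnion]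
    have hQW : ∀ n, W ∩ Q n = g n • (W ∩ P n) := by
      intro n
      show W ∩ g n • P n = g n • (W ∩ P n)
      rw [smul_set_inter, hWinv (g n)]
    rw [h1, h2,
      measure_iUnion (fun n m h =>
        ((Set.disjoint_iff_inter_eq_empty.mpr (hPdisj n m h)).mono
          inter_subset_right inter_subset_right))
        (fun n => hWm.inter (hPmeas n)),
      measure_iUnion (fun n m h =>
        ((Set.disjoint_iff_inter_eq_empty.mpr (hQdisj n m h)).mono
          inter_subset_right inter_subset_right))
        (fun n => hWm.inter (hQmeas n))]
    refine tsum_congr fun n => ?_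
    rw [hQW n, msmul]
  -- the X-remainder is null
  set A : Set M := ⋃ h : Γ ⋊[α] Λ, h • X' with hA
  have hAmeas : MeasurableSet A := MeasurableSet.iUnion fun h => smulMeas h hX'meas
  have hAinv : ∀ h : Γ ⋊[α] Λ, h • A = A := fun h => satEq X' h
  have hAsd : ∀ h : Γ ⋊[α] Λ, μ (symmDiff (h • A) A) = 0 := by
    intro h; rw [hAinv h, symmDiff_self]; simp
  have hADfin : μ (A ∩ D) ≠ ⊤ := by
    refine ne_top_of_le_ne_top hXfin (measure_mono ?_)
    exact inter_subset_right.trans hDX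
  have hAY : μ (A ∩ Y) = μ (A ∩ R) := by
    refine le_antisymm ?_ (measure_mono (inter_subset_inter_right _ hRY))
    have hAYsub : A ∩ Y ⊆ (A ∩ R) ∪ ⋃ h : Γ ⋊[α] Λ, (h • X' ∩ Y') := by
      rintro x ⟨hxA, hxY⟩
      by_cases hxR : x ∈ R
      · exact Or.inl ⟨hxA, hxR⟩
      · obtain ⟨h, hxs⟩ := mem_iUnion.mp hxA
        exact Or.inr (mem_iUnion.mpr ⟨h, hxs, hxY, hxR⟩)
    calc μ (A ∩ Y) ≤ μ ((A ∩ R) ∪ ⋃ h : Γ ⋊[α] Λ, (h • X' ∩ Y')) := measure_mono hAYsub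
      _ ≤ μ (A ∩ R) + μ (⋃ h : Γ ⋊[α] Λ, (h • X' ∩ Y')) := measure_union_le _ _
      _ = μ (A ∩ R) := by rw [measure_iUnion_null fun h => claimA h, add_zero]
  have hX'0 : μ X' = 0 := by
    have hsplit : A ∩ X = (A ∩ D) ∪ X' := by
      apply subset_antisymm
      · rintro x ⟨hxA, hxX⟩
        by_cases hxD : x ∈ D
        · exact Or.inl ⟨hxA, hxD⟩
        · exact Or.inr ⟨hxX, hxD⟩
      · rintro x (⟨hxA, hxD⟩ | hx)
        · exact ⟨hxA, hDX hxD⟩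
        · exact ⟨selfSub X' hx, hx.1⟩
    have hdisj : Disjoint (A ∩ D) X' :=
      (disjoint_sdiff_self_right (x := D) (y := X)).mono_left inter_subset_right
    have hAXeq : μ (A ∩ X) = μ (A ∩ D) + μ X' := by
      rw [hsplit, measure_union hdisj hX'meas]
    have heq : μ (A ∩ D) + μ X' = μ (A ∩ D) + 0 := by
      rw [add_zero, ← hAXeq, hinv A hAmeas hAsd, hAY,
        ← transfer A hAmeas hAinv]
    exact (ENNReal.add_right_inj hADfin).mp heq
  -- the Y-remainder is null
  set B : Set M := ⋃ h : Γ ⋊[α] Λ, h • Y' with hB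
  have hBmeas : MeasurableSet B := MeasurableSet.iUnion fun h => smulMeas h hY'meas
  have hBinv : ∀ h : Γ ⋊[α] Λ, h • B = B := fun h => satEq Y' h
  have hBsd : ∀ h : Γ ⋊[α] Λ, μ (symmDiff (h • B) B) = 0 := by
    intro h; rw [hBinv h, symmDiff_self]; simp
  have hY'0 : μ Y' = 0 := by
    have hsplit : B ∩ Y = (B ∩ R) ∪ Y' := by
      apply subset_antisymm
      · rintro x ⟨hxB, hxY⟩
        by_cases hxR : x ∈ R
        · exact Or.inl ⟨hxB, hxR⟩
        · exact Or.inr ⟨hxY, hxR⟩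
      · rintro x (⟨hxB, hxR⟩ | hx)
        · exact ⟨hxB, hRY hxR⟩
        · exact ⟨selfSub Y' hx, hx.1⟩
    have hdisj : Disjoint (B ∩ R) Y' :=
      (disjoint_sdiff_self_right (x := R) (y := Y)).mono_left inter_subset_right
    have hBYeq : μ (B ∩ Y) = μ (B ∩ R) + μ Y' := by
      rw [hsplit, measure_union hdisj hY'meas]
    have hBX : μ (B ∩ X) ≤ μ (B ∩ D) := by
      have hsub : B ∩ X ⊆ (B ∩ D) ∪ X' := by
        rintro x ⟨hxB, hxX⟩
        by_cases hxD : x ∈ D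
        · exact Or.inl ⟨hxB, hxD⟩
        · exact Or.inr ⟨hxX, hxD⟩
      calc μ (B ∩ X) ≤ μ ((B ∩ D) ∪ X') := measure_mono hsub
        _ ≤ μ (B ∩ D) + μ X' := measure_union_le _ _
        _ = μ (B ∩ D) := by rw [hX'0, add_zero]
    have hBRfin : μ (B ∩ R) ≠ ⊤ := by
      refine ne_top_of_le_ne_top hYfin (measure_mono ?_)
      exact inter_subset_right.trans hRY
    have hle : μ (B ∩ R) + μ Y' ≤ μ (B ∩ R) + 0 := by
      rw [add_zero]
      calc μ (B ∩ R) + μ Y' = μ (B ∩ Y) := hBYeq.symm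
        _ = μ (B ∩ X) := (hinv B hBmeas hBsd).symm
        _ ≤ μ (B ∩ D) := hBX
        _ = μ (B ∩ R) := transfer B hBmeas hBinv
    exact le_antisymm ((ENNReal.add_le_add_iff_left hBRfin).mp hle) zero_le

  -- construct the common fundamental domain
  set c : ℕ → Γ := fun n => α ((g n).right)⁻¹ (g n).left with hc
  set d : ℕ → Λ := fun n => ((g n).right)⁻¹ with hdd
  have hid : ∀ n, (SemidirectProduct.inl (c n) : Γ ⋊[α] Λ) =
      SemidirectProduct.inr (φ := α) (d n) * g n := by
    intro n; ext <;> simp [hc, hdd]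
  set F : Set M := ⋃ n, (SemidirectProduct.inl (c n) : Γ ⋊[α] Λ) • P n with hF
  have hFmeas : MeasurableSet F := MeasurableSet.iUnion fun n => smulMeas _ (hPmeas n)
  have hFQ : ∀ n, (SemidirectProduct.inl (c n) : Γ ⋊[α] Λ) • P n
      = (SemidirectProduct.inr (φ := α) (d n) : Γ ⋊[α] Λ) • Q n := by
    intro n
    rw [hid n, mul_smul]
  have hX'null : ∀ h : Γ ⋊[α] Λ, μ (h • X') = 0 := fun h => by rw [msmul]; exact hX'0
  have hY'null : ∀ h : Γ ⋊[α] Λ, μ (h • Y') = 0 := fun h => by rw [msmul]; exact hY'0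
  refine ⟨F, hFmeas, ⟨?_, ?_⟩, ⟨?_, ?_⟩⟩
  · -- Γ covering
    have hcoverX : (⋃ γ : Γ, (SemidirectProduct.inl γ : Γ ⋊[α] Λ) • X) ⊆
        (⋃ γ : Γ, (SemidirectProduct.inl γ : Γ ⋊[α] Λ) • F) ∪
          ⋃ γ : Γ, (SemidirectProduct.inl γ : Γ ⋊[α] Λ) • X' := by
      intro x hx
      obtain ⟨γ, hγ⟩ := mem_iUnion.mp hx
      obtain ⟨w, hwX, rfl⟩ := hγ
      by_cases hwD : w ∈ D
      · obtain ⟨n, hn⟩ := mem_iUnion.mp hwD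
        left
        refine mem_iUnion.mpr ⟨γ * (c n)⁻¹, ?_⟩
        have hkey : (SemidirectProduct.inl γ : Γ ⋊[α] Λ) • w
            = (SemidirectProduct.inl (γ * (c n)⁻¹) : Γ ⋊[α] Λ) •
              ((SemidirectProduct.inl (c n) : Γ ⋊[α] Λ) • w) := by
          rw [smul_smul, ← map_mul, inv_mul_cancel_right]
        beta_reduce
        rw [hkey]
        exact smul_mem_smul_set (mem_iUnion.mpr ⟨n, smul_mem_smul_set hn⟩)
      · right
        exact mem_iUnion.mpr ⟨γ, smul_mem_smul_set ⟨hwX, hwD⟩⟩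
    have hnull : μ ((⋃ γ : Γ, (SemidirectProduct.inl γ : Γ ⋊[α] Λ) • X)ᶜ
        ∪ ⋃ γ : Γ, (SemidirectProduct.inl γ : Γ ⋊[α] Λ) • X') = 0 :=
      measure_union_null hX.1 (measure_iUnion_null fun γ => hX'null _)
    refine measure_mono_null ?_ hnull
    intro x hx
    by_cases hxX : x ∈ ⋃ γ : Γ, (SemidirectProduct.inl γ : Γ ⋊[α] Λ) • X
    · rcases hcoverX hxX with h | h
      · exact absurd h hx
      · exact Or.inr h
    · exact Or.inl hxX
  · -- Γ pairwise
    intro γ γ' hne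
    have hsub : (SemidirectProduct.inl γ : Γ ⋊[α] Λ) • F ∩
        (SemidirectProduct.inl γ' : Γ ⋊[α] Λ) • F ⊆
        ⋃ n, ⋃ m, ((SemidirectProduct.inl (γ * c n) : Γ ⋊[α] Λ) • P n ∩
          (SemidirectProduct.inl (γ' * c m) : Γ ⋊[α] Λ) • P m) := by
      rintro x ⟨hx1, hx2⟩
      obtain ⟨w, hwF, rfl⟩ := hx1
      obtain ⟨n, hwn⟩ := mem_iUnion.mp hwF
      obtain ⟨v, hvP, hvw⟩ := hwn
      obtain ⟨u, huF, hux⟩ := hx2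
      obtain ⟨m, hum⟩ := mem_iUnion.mp huF
      obtain ⟨v', hv'P, hv'u⟩ := hum
      refine mem_iUnion.mpr ⟨n, mem_iUnion.mpr ⟨m, ⟨v, hvP, ?_⟩, ⟨v', hv'P, ?_⟩⟩⟩
      · beta_reduce at hvw ⊢
        rw [map_mul, mul_smul, hvw]
      · beta_reduce at hv'u hux ⊢
        rw [map_mul, mul_smul, hv'u]
        exact hux
    refine measure_mono_null hsub ?_
    refine measure_iUnion_null fun n => measure_iUnion_null fun m => ?_
    by_cases hcc : γ * c n = γ' * c m
    · rcases eq_or_ne n m with rfl | hnm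
      · exact absurd (mul_right_cancel hcc) hne
      · rw [hcc, ← smul_set_inter, hPdisj n m hnm]
        simp
    · refine measure_mono_null ?_ (hX.2 hcc)
      exact inter_subset_inter
        (smul_set_mono ((hPsub n).trans diff_subset))
        (smul_set_mono ((hPsub m).trans diff_subset))
  · -- Λ covering
    have hcoverY : (⋃ l : Λ, (SemidirectProduct.inr (φ := α) l : Γ ⋊[α] Λ) • Y) ⊆
        (⋃ l : Λ, (SemidirectProduct.inr (φ := α) l : Γ ⋊[α] Λ) • F) ∪
          ⋃ l : Λ, (SemidirectProduct.inr (φ := α) l : Γ ⋊[α] Λ) • Y' := by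
      intro x hx
      obtain ⟨l, hl⟩ := mem_iUnion.mp hx
      obtain ⟨w, hwY, rfl⟩ := hl
      by_cases hwR : w ∈ R
      · obtain ⟨n, hn⟩ := mem_iUnion.mp hwR
        left
        refine mem_iUnion.mpr ⟨l * (d n)⁻¹, ?_⟩
        have hkey : (SemidirectProduct.inr (φ := α) l : Γ ⋊[α] Λ) • w
            = (SemidirectProduct.inr (φ := α) (l * (d n)⁻¹) : Γ ⋊[α] Λ) •
              ((SemidirectProduct.inr (φ := α) (d n) : Γ ⋊[α] Λ) • w) := by
          rw [smul_smul, ← map_mul, inv_mul_cancel_right]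
        beta_reduce
        rw [hkey]
        refine smul_mem_smul_set (mem_iUnion.mpr ⟨n, ?_⟩)
        rw [hFQ n]
        exact smul_mem_smul_set hn
      · right
        exact mem_iUnion.mpr ⟨l, smul_mem_smul_set ⟨hwY, hwR⟩⟩
    have hnull : μ ((⋃ l : Λ, (SemidirectProduct.inr (φ := α) l : Γ ⋊[α] Λ) • Y)ᶜ
        ∪ ⋃ l : Λ, (SemidirectProduct.inr (φ := α) l : Γ ⋊[α] Λ) • Y') = 0 :=
      measure_union_null hY.1 (measure_iUnion_null fun l => hY'null _)
    refine measure_mono_null ?_ hnull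
    intro x hx
    by_cases hxY : x ∈ ⋃ l : Λ, (SemidirectProduct.inr (φ := α) l : Γ ⋊[α] Λ) • Y
    · rcases hcoverY hxY with h | h
      · exact absurd h hx
      · exact Or.inr h
    · exact Or.inl hxY
  · -- Λ pairwise
    intro l l' hne
    have hsub : (SemidirectProduct.inr (φ := α) l : Γ ⋊[α] Λ) • F ∩
        (SemidirectProduct.inr (φ := α) l' : Γ ⋊[α] Λ) • F ⊆
        ⋃ n, ⋃ m, ((SemidirectProduct.inr (φ := α) (l * d n) : Γ ⋊[α] Λ) • Q n ∩
          (SemidirectProduct.inr (φ := α) (l' * d m) : Γ ⋊[α] Λ) • Q m) := by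
      rintro x ⟨hx1, hx2⟩
      obtain ⟨w, hwF, rfl⟩ := hx1
      obtain ⟨n, hwn⟩ := mem_iUnion.mp hwF
      rw [hFQ n] at hwn
      obtain ⟨v, hvQ, hvw⟩ := hwn
      obtain ⟨u, huF, hux⟩ := hx2
      obtain ⟨m, hum⟩ := mem_iUnion.mp huF
      rw [hFQ m] at hum
      obtain ⟨v', hv'Q, hv'u⟩ := hum
      refine mem_iUnion.mpr ⟨n, mem_iUnion.mpr ⟨m, ⟨v, hvQ, ?_⟩, ⟨v', hv'Q, ?_⟩⟩⟩
      · beta_reduce at hvw ⊢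
        rw [map_mul, mul_smul, hvw]
      · beta_reduce at hv'u hux ⊢
        rw [map_mul, mul_smul, hv'u]
        exact hux
    refine measure_mono_null hsub ?_
    refine measure_iUnion_null fun n => measure_iUnion_null fun m => ?_
    by_cases hcc : l * d n = l' * d m
    · rcases eq_or_ne n m with rfl | hnm
      · exact absurd (mul_right_cancel hcc) hne
      · rw [hcc, ← smul_set_inter, hQdisj n m hnm]
        simp
    · refine measure_mono_null ?_ (hY.2 hcc)
      exact inter_subset_inter
        (smul_set_mono ((hQsub n).trans diff_subset))
        (smul_set_mono ((hQsub m).trans diff_subset))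
end
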